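/- Let ℓ be a Lyndon word with |ℓ| > 1 and |ℓ^l| > 1, where ℓ = ℓ^l ℓ^r is the costandard factorization. Then (ℓ^l)^r ≥ ℓ^r, i.e., the longest proper Lyndon suffix of ℓ^l is lexicographically greater than or equal to the longest proper Lyndon suffix of ℓ. -/

import Mathlib

/- Words over a linearly ordered alphabet `I` are lists, compared by the
lexicographic order of Lean's `LinearOrder (List I)` instance, in which a word
is smaller than any word of which it is a proper prefix. -/

variable {I : Type*} [LinearOrder I]

/-- A nonempty word is *Lyndon* if it is lexicographically smaller than
every proper nonempty suffix of itself. -/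
def IsLyndon (w : List I) : Prop :=
  w ≠ [] ∧ ∀ i, 0 < i → i < w.length → w < w.drop i

/-- `r` is the longest proper suffix of `l` that is Lyndon
(the right factor `l^r` of the costandard factorization). -/
def LongestLyndonSuffix (l r : List I) : Prop :=
  r <:+ l ∧ r.length < l.length ∧ IsLyndon r ∧
    ∀ r', r' <:+ l → r'.length < l.length → IsLyndon r' → r'.length ≤ r.length

/-- `p` is the longest proper prefix of `l` that is Lyndon
(the left factor `l^{ls}` of the standard factorization). -/
def LongestLyndonPrefix (l p : List I) : Prop :=
  p <+: l ∧ p.length < l.length ∧ IsLyndon p ∧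
    ∀ p', p' <+: l → p'.length < l.length → IsLyndon p' → p'.length ≤ p.length

/-- `fs` is the canonical factorization of `w`: a nonempty, lexicographically
nonincreasing list of Lyndon words whose concatenation is `w`. -/
def IsCanonicalFactorization (w : List I) (fs : List (List I)) : Prop :=
  w = fs.flatten ∧ fs ≠ [] ∧ (∀ f ∈ fs, IsLyndon f) ∧ fs.Chain' (· ≥ ·)
private lemma lex_of_lt {I : Type*} [LinearOrder I] {u v : List I} (h : u < v) :
    List.Lex (· < ·) u v := h

private lemma lt_of_lex {I : Type*} [LinearOrder I] {u v : List I}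
    (h : List.Lex (· < ·) u v) : u < v := h

/-- cancel common prefix -/
private lemma lex_append_left_iff {I : Type*} [LinearOrder I] (u s t : List I) :
    List.Lex (· < ·) (u ++ s) (u ++ t) ↔ List.Lex (· < ·) s t := by
  induction u with
  | nil => simp
  | cons a u ih => simpa [List.lex_cons_iff] using ih

/-- If `u < t` and `u` is not a prefix of `t`, appending anything preserves `<`. -/
private lemma lex_append_of_not_prefix {I : Type*} [LinearOrder I] {u t : List I}
    (h : List.Lex (· < ·) u t) (hnp : ¬ u <+: t) (v w : List I) :
    List.Lex (· < ·) (u ++ v) (t ++ w) := by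
  induction h with
  | nil => exact absurd (List.nil_prefix) hnp
  | @cons a l₁ l₂ h ih =>
      exact List.Lex.cons (ih (fun hp => hnp (List.cons_prefix_cons.2 ⟨rfl, hp⟩)))
  | rel h => exact List.Lex.rel h

private lemma append_lt_right {I : Type*} [LinearOrder I] {u v : List I}
    (hv : IsLyndon v) (hu : u ≠ []) (huv : u < v) : u ++ v < v := by
  by_cases hp : u <+: v
  · obtain ⟨t, rfl⟩ := hp
    have ht : t ≠ [] := by rintro rfl; simp at huv
    have h1 : 0 < u.length := List.length_pos_iff.2 hu
    have h2 : u.length < (u ++ t).length := by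
      simp [List.length_append]; exact List.length_pos_iff.2 ht
    have := hv.2 u.length h1 h2
    rw [List.drop_append_of_le_length le_rfl, List.drop_length, List.nil_append] at this
    exact lt_of_lex ((lex_append_left_iff u (u ++ t) t).2 (lex_of_lt this))
  · have := lex_append_of_not_prefix (lex_of_lt huv) hp v []
    rw [List.append_nil] at this
    exact lt_of_lex this

/-- If `u < v` and both are Lyndon, then `u ++ v` is Lyndon. -/
private lemma isLyndon_append {I : Type*} [LinearOrder I] {u v : List I}
    (hu : IsLyndon u) (hv : IsLyndon v) (huv : u < v) : IsLyndon (u ++ v) := by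
  refine ⟨by simp [hu.1], fun i hi hilen => ?_⟩
  rcases lt_trichotomy i u.length with h | h | h
  · rw [List.drop_append_of_le_length h.le]
    have hut : u < u.drop i := hu.2 i hi h
    have hnp : ¬ u <+: u.drop i := fun hp => by
      have := hp.length_le
      simp [List.length_drop] at this
      omega
    exact lt_of_lex (lex_append_of_not_prefix (lex_of_lt hut) hnp v v)
  · subst h
    rw [List.drop_append_of_le_length le_rfl, List.drop_length, List.nil_append]
    exact append_lt_right hv hu.1 huv
  · have : (u ++ v).drop i = v.drop (i - u.length) := by
      rw [List.drop_append]
      simp [List.drop_eq_nil_of_le h.le]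
    rw [this]
    have h1 : 0 < i - u.length := by omega
    have h2 : i - u.length < v.length := by
      simp [List.length_append] at hilen; omega
    exact lt_trans (append_lt_right hv hu.1 huv) (hv.2 _ h1 h2)

/-- If `ℓ = ℓ^l ℓ^r` is the costandard factorization of a Lyndon word `ℓ` with
`|ℓ| > 1` and `|ℓ^l| > 1`, then `(ℓ^l)^r ≥ ℓ^r`. -/
theorem costandard_left_suffix_ge (ℓ p r pr : List I)
    (hℓ : IsLyndon ℓ) (hlen : 1 < ℓ.length)
    (hr : LongestLyndonSuffix ℓ r) (hsplit : ℓ = p ++ r) (hplen : 1 < p.length)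
    (hpr : LongestLyndonSuffix p pr) :
    r ≤ pr := by
  by_contra hlt
  push_neg at hlt
  have hprL : IsLyndon pr := hpr.2.2.1
  have hrL : IsLyndon r := hr.2.2.1
  have hLy : IsLyndon (pr ++ r) := isLyndon_append hprL hrL hlt
  have hsuf : pr ++ r <:+ ℓ := by
    obtain ⟨t, ht⟩ := hpr.1
    exact ⟨t, by rw [hsplit, ← ht, List.append_assoc]⟩
  have hlen2 : (pr ++ r).length < ℓ.length := by
    rw [hsplit]; simp [List.length_append]; exact hpr.2.1
  have := hr.2.2.2 (pr ++ r) hsuf hlen2 hLy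
  rw [List.length_append] at this
  have hpos : 0 < pr.length := List.length_pos_iff.2 hprL.1
  omega
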